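/- Let f: 𝕋×ℝ → ℝ be derivable, let μ ∈ M(𝕋×ℝ), and let W_ε(θ) := ∫₀^{θ̄} h_ε(θ') dθ' be the primitive of the regularized even-primitive kernel, where h_ε(θ) = sin(θ)/(ε² + |θ|_o²)^α. Then W_ε is 2π-periodic, nonnegative, vanishes exactly on 2πℤ, is a primitive of h_ε, and for α ∈ (1/2, 1) there is a constant M_{α,p} independent of ε such that ‖W_ε‖_{W^{1,p}(𝕋)} ≤ M_{α,p} for every 1 ≤ p < 1/(2α - 1). -/

import Mathlib

open intervalIntegral Real Set MeasureTheory

/-- Representative of `θ` modulo `2π` in the interval `(-π, π]`. -/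
noncomputable def rep (θ : ℝ) : ℝ := toIocMod Real.two_pi_pos (-Real.pi) θ

/-- Orthodromic distance `|θ|_o`. -/
noncomputable def ortho (θ : ℝ) : ℝ := |rep θ|

/-- The regularized kernel `h_ε(θ) = sin θ / (ε² + |θ|_o²)^α`. -/
noncomputable def heps (α ε θ : ℝ) : ℝ :=
  Real.sin θ / (ε ^ 2 + (ortho θ) ^ 2) ^ α

/-- The primitive `W_ε(θ) = ∫₀^{θ̄} h_ε(θ') dθ'` of the regularized kernel. -/
noncomputable def Weps (α ε θ : ℝ) : ℝ := ∫ t in (0:ℝ)..(rep θ), heps α ε t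

lemma rep_mem (θ : ℝ) : rep θ ∈ Set.Ioc (-π) π := by
  have := toIocMod_mem_Ioc Real.two_pi_pos (-π) θ
  rwa [show -π + 2*π = π by ring] at this

lemma rep_eq_self {θ : ℝ} (h : θ ∈ Set.Ioc (-π) π) : rep θ = θ := by
  rw [rep, toIocMod_eq_self]
  rwa [show -π + 2*π = π by ring]

lemma rep_periodic : Function.Periodic rep (2*π) :=
  toIocMod_periodic Real.two_pi_pos (-π)

lemma exists_rep (θ : ℝ) : ∃ k : ℤ, θ = rep θ + k • (2*π) :=
  ⟨toIocDiv Real.two_pi_pos (-π) θ,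
    (toIocMod_add_toIocDiv_zsmul Real.two_pi_pos (-π) θ).symm⟩

lemma abs_rep_le (θ : ℝ) : |rep θ| ≤ π :=
  abs_le.2 ⟨(rep_mem θ).1.le, (rep_mem θ).2⟩

lemma coe_rep (θ : ℝ) : ((rep θ : ℝ) : AddCircle (2*π)) = (θ : AddCircle (2*π)) := by
  obtain ⟨k, hk⟩ := exists_rep θ
  conv_rhs => rw [hk]
  push_cast
  rw [QuotientAddGroup.eq_iff_sub_mem]
  simp only [sub_add_cancel_left, neg_mem_iff]
  exact AddSubgroup.zsmul_mem_zmultiples _ k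

lemma ortho_eq_norm (θ : ℝ) : ortho θ = ‖((θ : ℝ) : AddCircle (2*π))‖ := by
  rw [← coe_rep, ortho, eq_comm]
  rw [AddCircle.norm_coe_eq_abs_iff (p := 2*π) (by positivity)]
  rw [abs_of_pos Real.two_pi_pos]
  simpa using abs_rep_le θ

lemma continuous_ortho : Continuous ortho := by
  have : ortho = fun θ => ‖((θ : ℝ) : AddCircle (2*π))‖ := funext ortho_eq_norm
  rw [this]
  exact continuous_norm.comp (AddCircle.continuous_mk' (2*π))

lemma ortho_nonneg (θ : ℝ) : 0 ≤ ortho θ := abs_nonneg _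
lemma ortho_le_pi (θ : ℝ) : ortho θ ≤ π := abs_rep_le θ

lemma ortho_neg (θ : ℝ) : ortho (-θ) = ortho θ := by
  rw [ortho_eq_norm, ortho_eq_norm θ,
    show ((-θ : ℝ) : AddCircle (2*π)) = -((θ:ℝ) : AddCircle (2*π)) from rfl, norm_neg]

lemma ortho_periodic : Function.Periodic ortho (2*π) := fun θ => by
  rw [ortho, rep_periodic θ, ortho]

lemma heps_periodic (α ε : ℝ) : Function.Periodic (heps α ε) (2*π) := fun θ => by
  rw [heps, heps, Real.sin_periodic θ, ortho_periodic θ]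

lemma heps_odd (α ε θ : ℝ) : heps α ε (-θ) = - heps α ε θ := by
  rw [heps, heps, Real.sin_neg, ortho_neg, neg_div]

lemma denom_pos {ε : ℝ} (hε : 0 < ε) (α θ : ℝ) : 0 < (ε ^ 2 + (ortho θ) ^ 2) ^ α :=
  Real.rpow_pos_of_pos (by positivity) α

lemma continuous_heps {ε : ℝ} (hε : 0 < ε) (α : ℝ) : Continuous (heps α ε) := by
  apply Real.continuous_sin.div
  · exact (continuous_const.add (continuous_ortho.pow 2)).rpow_const
      (fun θ => Or.inl (by positivity : ε ^ 2 + ortho θ ^ 2 ≠ 0))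
  · exact fun θ => (denom_pos hε α θ).ne'

lemma heps_intInt {ε : ℝ} (hε : 0 < ε) (α a b : ℝ) :
    IntervalIntegrable (heps α ε) volume a b :=
  (continuous_heps hε α).intervalIntegrable a b


lemma integral_heps_symm {ε : ℝ} (hε : 0 < ε) (α b : ℝ) :
    ∫ t in (0:ℝ)..(-b), heps α ε t = ∫ t in (0:ℝ)..b, heps α ε t := by
  have h1 : ∫ x in (0:ℝ)..b, heps α ε (-x) = ∫ x in (-b)..(0:ℝ), heps α ε x := by
    simpa using integral_comp_neg (a := (0:ℝ)) (b := b) (f := heps α ε)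
  have h2 : ∫ x in (0:ℝ)..b, heps α ε (-x) = -∫ x in (0:ℝ)..b, heps α ε x := by
    simp [heps_odd, intervalIntegral.integral_neg]
  rw [integral_symm]
  rw [h2] at h1
  linarith

lemma integral_heps_period {ε : ℝ} (hε : 0 < ε) (α : ℝ) :
    ∫ t in (0:ℝ)..(2*π), heps α ε t = 0 := by
  have hs := (heps_periodic α ε).intervalIntegral_add_eq 0 (-π)
  rw [zero_add, show -π + 2*π = π by ring] at hs
  have hsplit : ∫ t in (-π)..π, heps α ε t
      = (∫ t in (-π)..(0:ℝ), heps α ε t) + ∫ t in (0:ℝ)..π, heps α ε t :=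
    (integral_add_adjacent_intervals (heps_intInt hε α _ _) (heps_intInt hε α _ _)).symm
  have hneg : ∫ t in (-π)..(0:ℝ), heps α ε t = - ∫ t in (0:ℝ)..π, heps α ε t := by
    rw [integral_symm, integral_heps_symm hε α]
  rw [hs, hsplit, hneg, neg_add_cancel]

lemma Weps_eq_integral {ε : ℝ} (hε : 0 < ε) (α θ : ℝ) :
    Weps α ε θ = ∫ t in (0:ℝ)..θ, heps α ε t := by
  obtain ⟨k, hk⟩ := exists_rep θ
  have h2 : ∫ t in (rep θ)..(rep θ + k • (2*π)), heps α ε t = 0 := by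
    rw [(heps_periodic α ε).intervalIntegral_add_zsmul_eq k (rep θ)
        (fun a b => heps_intInt hε α a b),
      (heps_periodic α ε).intervalIntegral_add_eq (rep θ) 0, zero_add,
      integral_heps_period hε α, smul_zero]
  conv_rhs => rw [hk]
  rw [← integral_add_adjacent_intervals (heps_intInt hε α 0 (rep θ))
    (heps_intInt hε α (rep θ) (rep θ + k • (2*π))), h2, Weps, add_zero]

lemma Weps_hasDerivAt {ε : ℝ} (hε : 0 < ε) (α θ : ℝ) :
    HasDerivAt (Weps α ε) (heps α ε θ) θ := by
  have : Weps α ε = fun x => ∫ t in (0:ℝ)..x, heps α ε t :=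
    funext (Weps_eq_integral hε α)
  rw [this]
  exact ((continuous_heps hε α).integral_hasStrictDerivAt 0 θ).hasDerivAt

lemma Weps_periodic (α ε : ℝ) : Function.Periodic (Weps α ε) (2*π) := fun θ => by
  rw [Weps, Weps, rep_periodic θ]

lemma integral_heps_pos {ε : ℝ} (hε : 0 < ε) (α : ℝ) {a : ℝ} (ha : 0 < a) (hap : a ≤ π) :
    0 < ∫ t in (0:ℝ)..a, heps α ε t := by
  apply intervalIntegral_pos_of_pos_on (heps_intInt hε α 0 a) _ ha
  intro x hx
  exact div_pos (Real.sin_pos_of_pos_of_lt_pi hx.1 (lt_of_lt_of_le hx.2 hap))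
    (denom_pos hε α x)

lemma Weps_pos {ε : ℝ} (hε : 0 < ε) (α : ℝ) {θ : ℝ} (h : rep θ ≠ 0) :
    0 < Weps α ε θ := by
  rcases lt_or_gt_of_ne h with hneg | hpos
  · have : Weps α ε θ = ∫ t in (0:ℝ)..(-(rep θ)), heps α ε t := by
      rw [Weps]
      nth_rewrite 1 [show rep θ = -(-(rep θ)) by ring]
      rw [integral_heps_symm hε α]
    rw [this]
    exact integral_heps_pos hε α (by linarith) (by linarith [(rep_mem θ).1])
  · rw [Weps]
    exact integral_heps_pos hε α hpos (rep_mem θ).2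

lemma Weps_nonneg {ε : ℝ} (hε : 0 < ε) (α θ : ℝ) : 0 ≤ Weps α ε θ := by
  rcases eq_or_ne (rep θ) 0 with h | h
  · rw [Weps, h, integral_same]
  · exact (Weps_pos hε α h).le

lemma rep_eq_zero_iff (θ : ℝ) : rep θ = 0 ↔ ∃ k : ℤ, θ = 2 * π * k := by
  constructor
  · intro h
    obtain ⟨k, hk⟩ := exists_rep θ
    exact ⟨k, by rw [hk, h, zero_add, zsmul_eq_mul]; ring⟩
  · rintro ⟨k, rfl⟩
    have : 2 * π * (k : ℝ) = k • (2*π) + 0 := by rw [zsmul_eq_mul]; ring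
    rw [rep, this, toIocMod_zsmul_add]
    exact rep_eq_self ⟨by linarith [Real.pi_pos], Real.pi_pos.le⟩

lemma Weps_eq_zero_iff {ε : ℝ} (hε : 0 < ε) (α θ : ℝ) :
    Weps α ε θ = 0 ↔ ∃ k : ℤ, θ = 2 * π * k := by
  rw [← rep_eq_zero_iff]
  constructor
  · intro h
    by_contra hne
    exact (Weps_pos hε α hne).ne' h
  · intro h
    rw [Weps, h, integral_same]

lemma sin_rep (θ : ℝ) : Real.sin (rep θ) = Real.sin θ := by
  obtain ⟨k, hk⟩ := exists_rep θ
  conv_rhs => rw [hk]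
  rw [zsmul_eq_mul, Real.sin_add_int_mul_two_pi]

lemma abs_sin_le_ortho (θ : ℝ) : |Real.sin θ| ≤ ortho θ := by
  rw [← sin_rep θ, ortho]
  exact Real.abs_sin_le_abs

lemma abs_heps_le {ε : ℝ} (hε : 0 < ε) {α : ℝ} (hα0 : 0 ≤ α) (θ : ℝ) :
    |heps α ε θ| ≤ ortho θ ^ (1 - 2*α) := by
  rcases eq_or_lt_of_le (ortho_nonneg θ) with h0 | h0
  · have hsin : Real.sin θ = 0 := by
      have : rep θ = 0 := abs_eq_zero.1 h0.symm
      rw [← sin_rep θ, this, Real.sin_zero]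
    rw [heps, hsin, zero_div, abs_zero]
    exact Real.rpow_nonneg (ortho_nonneg θ) _
  · have hd : ortho θ ^ (2*α) ≤ (ε ^ 2 + (ortho θ) ^ 2) ^ α := by
      rw [show (2*α : ℝ) = 2 * α from rfl, Real.rpow_mul (ortho_nonneg θ),
        Real.rpow_two]
      exact Real.rpow_le_rpow (by positivity)
        (le_add_of_nonneg_left (by positivity)) hα0
    have habs : |heps α ε θ| = |Real.sin θ| / (ε ^ 2 + (ortho θ) ^ 2) ^ α := by
      rw [heps, abs_div, abs_of_pos (denom_pos hε α θ)]
    rw [habs, show (1 - 2*α : ℝ) = 1 - 2*α from rfl, Real.rpow_sub h0,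
      Real.rpow_one]
    exact div_le_div₀ (ortho_nonneg θ) (abs_sin_le_ortho θ)
      (Real.rpow_pos_of_pos h0 _) hd

lemma abs_heps_rpow_le {ε : ℝ} (hε : 0 < ε) {α : ℝ} (hα0 : 0 ≤ α) {p : ℝ}
    (hp : 0 ≤ p) (θ : ℝ) : |heps α ε θ| ^ p ≤ ortho θ ^ ((1 - 2*α) * p) := by
  rw [Real.rpow_mul (ortho_nonneg θ)]
  exact Real.rpow_le_rpow (abs_nonneg _) (abs_heps_le hε hα0 θ) hp

lemma ortho_eq_self {t : ℝ} (h0 : 0 ≤ t) (hπ : t ≤ π) : ortho t = t := by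
  rw [ortho, rep_eq_self ⟨by linarith [Real.pi_pos], hπ⟩, abs_of_nonneg h0]

lemma abs_Weps_le {ε : ℝ} (hε : 0 < ε) {α : ℝ} (hα : α ∈ Set.Ioo (1/2 : ℝ) 1) (θ : ℝ) :
    |Weps α ε θ| ≤ ∫ t in (0:ℝ)..π, t ^ (1 - 2*α) := by
  obtain ⟨hα1, hα2⟩ := hα
  have hexp : (-1 : ℝ) < 1 - 2*α := by linarith
  have key : ∫ t in (0:ℝ)..(rep θ), heps α ε t
      = ∫ t in (0:ℝ)..|rep θ|, heps α ε t := by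
    rcases abs_cases (rep θ) with ⟨h1, _⟩ | ⟨h1, _⟩
    · rw [h1]
    · rw [h1, integral_heps_symm hε α]
  calc |Weps α ε θ| = |∫ t in (0:ℝ)..|rep θ|, heps α ε t| := by rw [Weps, key]
    _ ≤ ∫ t in (0:ℝ)..|rep θ|, |heps α ε t| :=
        abs_integral_le_integral_abs (abs_nonneg _)
    _ ≤ ∫ t in (0:ℝ)..|rep θ|, t ^ (1 - 2*α) := by
        apply integral_mono_on (abs_nonneg _)
          ((continuous_heps hε α).abs.intervalIntegrable _ _)
          (intervalIntegrable_rpow' hexp)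
        intro t ht
        have h1 : t ≤ π := le_trans ht.2 (abs_rep_le θ)
        calc |heps α ε t| ≤ ortho t ^ (1 - 2*α) := abs_heps_le hε (by linarith) t
          _ = t ^ (1 - 2*α) := by rw [ortho_eq_self ht.1 h1]
    _ ≤ ∫ t in (0:ℝ)..π, t ^ (1 - 2*α) := by
        apply integral_mono_interval le_rfl (abs_nonneg _) (abs_rep_le θ) _
          (intervalIntegrable_rpow' hexp)
        rw [Filter.EventuallyLE, ae_restrict_iff' measurableSet_Ioc]
        exact Filter.Eventually.of_forall
          (fun t ht => Real.rpow_nonneg ht.1.le _)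

lemma bound_part {α : ℝ} (hα : α ∈ Set.Ioo (1/2:ℝ) 1) {p : ℝ} (hp1 : 1 ≤ p)
    (hpc : p < 1 / (2 * α - 1)) :
    ∃ M : ℝ, ∀ ε' > (0:ℝ),
      (∫ θ in (-π)..π, |Weps α ε' θ| ^ p)
        + (∫ θ in (-π)..π, |heps α ε' θ| ^ p) ≤ M := by
  obtain ⟨hα1, hα2⟩ := hα
  have hp0 : 0 < p := lt_of_lt_of_le one_pos hp1
  have h2α : 0 < 2*α - 1 := by linarith
  have hc : (-1:ℝ) < (1 - 2*α) * p := by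
    have h1 := (lt_div_iff₀ h2α).1 hpc
    nlinarith
  set C := ∫ t in (0:ℝ)..π, t ^ (1 - 2*α) with hC
  set B := ∫ t in (0:ℝ)..π, t ^ ((1 - 2*α)*p) with hB
  refine ⟨2 * π * C ^ p + 2 * B, ?_⟩
  intro ε' hε'
  have hWcont : Continuous (Weps α ε') :=
    continuous_iff_continuousAt.2 fun θ => (Weps_hasDerivAt hε' α θ).continuousAt
  have hWint : IntervalIntegrable (fun θ => |Weps α ε' θ| ^ p) volume (-π) π :=
    ((hWcont.abs).rpow_const (fun θ => Or.inr hp0.le)).intervalIntegrable _ _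
  have hhint : ∀ a b : ℝ, IntervalIntegrable (fun θ => |heps α ε' θ| ^ p) volume a b :=
    fun a b => (((continuous_heps hε' α).abs).rpow_const
      (fun θ => Or.inr hp0.le)).intervalIntegrable a b
  have hW1 : (∫ θ in (-π)..π, |Weps α ε' θ| ^ p) ≤ 2 * π * C ^ p := by
    have hpt : ∀ θ ∈ Set.Icc (-π) π, |Weps α ε' θ| ^ p ≤ C ^ p := fun θ _ =>
      Real.rpow_le_rpow (abs_nonneg _) (abs_Weps_le hε' ⟨hα1, hα2⟩ θ) hp0.le
    calc (∫ θ in (-π)..π, |Weps α ε' θ| ^ p) ≤ ∫ _ in (-π)..π, C ^ p :=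
        integral_mono_on (by linarith [Real.pi_pos]) hWint intervalIntegrable_const hpt
      _ = 2 * π * C ^ p := by rw [intervalIntegral.integral_const, smul_eq_mul]; ring
  have hhalf : (∫ θ in (0:ℝ)..π, |heps α ε' θ| ^ p) ≤ B := by
    apply integral_mono_on Real.pi_pos.le (hhint 0 π) (intervalIntegrable_rpow' hc)
    intro θ hθ
    calc |heps α ε' θ| ^ p ≤ ortho θ ^ ((1-2*α)*p) :=
        abs_heps_rpow_le hε' (by linarith) hp0.le θ
      _ = θ ^ ((1-2*α)*p) := by rw [ortho_eq_self hθ.1 hθ.2]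
  have hneg : (∫ θ in (-π)..(0:ℝ), |heps α ε' θ| ^ p)
      = ∫ θ in (0:ℝ)..π, |heps α ε' θ| ^ p := by
    have h := integral_comp_neg (a := (0:ℝ)) (b := π)
      (f := fun θ => |heps α ε' θ| ^ p)
    simp only [heps_odd, abs_neg, neg_zero] at h
    exact h.symm
  have hh : (∫ θ in (-π)..π, |heps α ε' θ| ^ p) ≤ 2 * B := by
    rw [← integral_add_adjacent_intervals (hhint (-π) 0) (hhint 0 π), hneg]
    linarith
  linarith


/-- `W_ε` is `2π`-periodic, nonnegative, vanishes exactly on `2πℤ`, and is a primitive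
of `h_ε`; moreover, for `α ∈ (1/2, 1)` and `1 ≤ p < 1/(2α-1)` there is a constant
`M_{α,p}` independent of `ε` bounding the `W^{1,p}(𝕋)`-norm of `W_ε` (i.e. the
`L^p`-norms over one period of `W_ε` and of its derivative `h_ε`). -/
theorem stmt17 (α : ℝ) (hα : α ∈ Set.Ioo (0:ℝ) 1) (ε : ℝ) (hε : 0 < ε) :
    Function.Periodic (Weps α ε) (2 * Real.pi)
    ∧ (∀ θ, 0 ≤ Weps α ε θ)
    ∧ (∀ θ, Weps α ε θ = 0 ↔ ∃ k : ℤ, θ = 2 * Real.pi * k)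
    ∧ (∀ θ, HasDerivAt (Weps α ε) (heps α ε θ) θ)
    ∧ (α ∈ Set.Ioo (1/2 : ℝ) 1 → ∀ p : ℝ, 1 ≤ p → p < 1 / (2 * α - 1) →
        ∃ M : ℝ, ∀ ε' > (0:ℝ),
          (∫ θ in (-Real.pi)..Real.pi, |Weps α ε' θ| ^ p)
            + (∫ θ in (-Real.pi)..Real.pi, |heps α ε' θ| ^ p) ≤ M) := by
  exact ⟨Weps_periodic α ε, Weps_nonneg hε α, fun θ => Weps_eq_zero_iff hε α θ,
    fun θ => Weps_hasDerivAt hε α θ, fun hα' p hp1 hpc => bound_part hα' hp1 hpc⟩
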